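/- Let P_n be the path graph with vertices v_1,…,v_n. A cascade set C completely floods P_n if and only if v_1 ∈ C, v_n ∈ C, and there are no two consecutive vertices v_i, v_{i+1} both missing from C. -/

import Mathlib

open scoped Classical
open Polynomial

/-- One step of the cascade sequence: add all vertices having at least two
neighbors in the current set. -/
noncomputable def floodStep {V : Type*} (G : SimpleGraph V) [Fintype V]
    (C : Finset V) : Finset V :=
  C ∪ Finset.univ.filter (fun x => 2 ≤ (C.filter (fun y => G.Adj x y)).card)

/-- `C` completely floods `G`: the cascade sequence stabilizes to all of `V`.
Since `floodStep` is inflationary, this is equivalent to some iterate being `univ`. -/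
def Floods {V : Type*} (G : SimpleGraph V) [Fintype V] (C : Finset V) : Prop :=
  ∃ k, (floodStep G)^[k] C = Finset.univ

/-- The flood polynomial of `G`. -/
noncomputable def floodPoly {V : Type*} (G : SimpleGraph V) [Fintype V] :
    Polynomial ℕ :=
  ∑ C ∈ Finset.univ.filter (fun C : Finset V => Floods G C), Polynomial.X ^ C.card

/-- The degree of a vertex. -/
noncomputable def deg {V : Type*} (G : SimpleGraph V) [Fintype V] (v : V) : ℕ :=
  (Finset.univ.filter (fun y => G.Adj v y)).card

lemma mem_floodStep_iff {V : Type*} (G : SimpleGraph V) [Fintype V] {C : Finset V}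
    {x : V} : x ∈ floodStep G C ↔ x ∈ C ∨ 2 ≤ (C.filter (fun y => G.Adj x y)).card := by
  simp [floodStep]

lemma not_mem_floodStep {V : Type*} (G : SimpleGraph V) [Fintype V] {C : Finset V}
    {x : V} (hx : x ∉ C) (h : (C.filter (fun y => G.Adj x y)).card ≤ 1) :
    x ∉ floodStep G C := by
  rw [mem_floodStep_iff]
  push_neg
  exact ⟨hx, by omega⟩

lemma endpoint_stays {n : ℕ} {C : Finset (Fin n)} {x : Fin n}
    (hsub : ∀ a b : Fin n, (SimpleGraph.pathGraph n).Adj x a →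
      (SimpleGraph.pathGraph n).Adj x b → a = b)
    (hx : x ∉ C) : ∀ k, x ∉ (floodStep (SimpleGraph.pathGraph n))^[k] C := by
  intro k
  induction k with
  | zero => simpa
  | succ k ih =>
    rw [Function.iterate_succ_apply']
    refine not_mem_floodStep _ ih ?_
    refine Finset.card_le_one.mpr ?_
    intro a ha b hb
    simp only [Finset.mem_filter] at ha hb
    exact hsub a b ha.2 hb.2

lemma pair_stays {n : ℕ} {C : Finset (Fin n)} {i : ℕ} (h1 : i + 1 < n)
    (hi : (⟨i, Nat.lt_of_succ_lt h1⟩ : Fin n) ∉ C) (hi1 : (⟨i + 1, h1⟩ : Fin n) ∉ C) :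
    ∀ k, (⟨i, Nat.lt_of_succ_lt h1⟩ : Fin n) ∉ (floodStep (SimpleGraph.pathGraph n))^[k] C ∧
      (⟨i + 1, h1⟩ : Fin n) ∉ (floodStep (SimpleGraph.pathGraph n))^[k] C := by
  intro k
  induction k with
  | zero => simpa using ⟨hi, hi1⟩
  | succ k ih =>
    obtain ⟨ih1, ih2⟩ := ih
    rw [Function.iterate_succ_apply']
    constructor
    · refine not_mem_floodStep _ ih1 ?_
      refine Finset.card_le_one.mpr ?_
      intro a ha b hb
      simp only [Finset.mem_filter, SimpleGraph.pathGraph_adj] at ha hb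
      have ha' : a.val + 1 = i := by
        rcases ha.2 with h | h
        · exfalso; apply ih2
          have hae : a = (⟨i + 1, h1⟩ : Fin n) := by
            apply Fin.ext; simp only at h ⊢; omega
          rw [← hae]; exact ha.1
        · exact h
      have hb' : b.val + 1 = i := by
        rcases hb.2 with h | h
        · exfalso; apply ih2
          have hbe : b = (⟨i + 1, h1⟩ : Fin n) := by
            apply Fin.ext; simp only at h ⊢; omega
          rw [← hbe]; exact hb.1
        · exact h
      apply Fin.ext; omega
    · refine not_mem_floodStep _ ih2 ?_
      refine Finset.card_le_one.mpr ?_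
      intro a ha b hb
      simp only [Finset.mem_filter, SimpleGraph.pathGraph_adj] at ha hb
      have ha' : (i + 1) + 1 = a.val := by
        rcases ha.2 with h | h
        · exact h
        · exfalso; apply ih1
          have hae : a = (⟨i, Nat.lt_of_succ_lt h1⟩ : Fin n) := by
            apply Fin.ext; simp only at h ⊢; omega
          rw [← hae]; exact ha.1
      have hb' : (i + 1) + 1 = b.val := by
        rcases hb.2 with h | h
        · exact h
        · exfalso; apply ih1
          have hbe : b = (⟨i, Nat.lt_of_succ_lt h1⟩ : Fin n) := by
            apply Fin.ext; simp only at h ⊢; omega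
          rw [← hbe]; exact hb.1
      apply Fin.ext; omega

theorem path_floods_iff (n : ℕ) (hn : 1 ≤ n) (C : Finset (Fin n)) :
    Floods (SimpleGraph.pathGraph n) C ↔
      ((⟨0, by omega⟩ : Fin n) ∈ C ∧ (⟨n - 1, by omega⟩ : Fin n) ∈ C ∧
        ∀ i : ℕ, (h : i + 1 < n) →
          ((⟨i, by omega⟩ : Fin n) ∈ C ∨ (⟨i + 1, h⟩ : Fin n) ∈ C)) := by
  constructor
  · rintro ⟨k, hk⟩
    refine ⟨?_, ?_, ?_⟩
    · by_contra h0
      have hst := endpoint_stays (x := (⟨0, by omega⟩ : Fin n)) ?_ h0 k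
      · rw [hk] at hst; exact hst (Finset.mem_univ _)
      · intro a b ha hb
        rw [SimpleGraph.pathGraph_adj] at ha hb
        simp only at ha hb
        apply Fin.ext; omega
    · by_contra h0
      have hst := endpoint_stays (x := (⟨n - 1, by omega⟩ : Fin n)) ?_ h0 k
      · rw [hk] at hst; exact hst (Finset.mem_univ _)
      · intro a b ha hb
        rw [SimpleGraph.pathGraph_adj] at ha hb
        have hav := a.isLt
        have hbv := b.isLt
        simp only at ha hb
        apply Fin.ext; omega
    · intro i hin
      by_contra h0
      push_neg at h0
      have hst := (pair_stays hin h0.1 h0.2 k).1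
      rw [hk] at hst; exact hst (Finset.mem_univ _)
  · rintro ⟨h0, hlast, hcons⟩
    refine ⟨1, ?_⟩
    rw [Function.iterate_one]
    apply Finset.eq_univ_of_forall
    intro x
    by_cases hx : x ∈ C
    · rw [mem_floodStep_iff]; exact Or.inl hx
    · have hx0 : x.val ≠ 0 := by
        intro h; apply hx
        have hxe : x = (⟨0, by omega⟩ : Fin n) := Fin.ext h
        rwa [hxe]
      have hxl : x.val ≠ n - 1 := by
        intro h; apply hx
        have hxe : x = (⟨n - 1, by omega⟩ : Fin n) := Fin.ext h
        rwa [hxe]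
      have hxlt := x.isLt
      have hlt : x.val + 1 < n := by omega
      have hprev : (⟨x.val - 1, by omega⟩ : Fin n) ∈ C := by
        rcases hcons (x.val - 1) (by omega) with h | h
        · exact h
        · exfalso; apply hx
          have hxe : x = (⟨x.val - 1 + 1, by omega⟩ : Fin n) := Fin.ext (by show x.val = x.val - 1 + 1; omega)
          rwa [hxe]
      have hnext : (⟨x.val + 1, hlt⟩ : Fin n) ∈ C := by
        rcases hcons x.val hlt with h | h
        · exfalso; apply hx
          have hxe : x = (⟨x.val, by omega⟩ : Fin n) := Fin.ext rfl
          rwa [hxe]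
        · exact h
      rw [mem_floodStep_iff]
      right
      have hsub : ({(⟨x.val - 1, by omega⟩ : Fin n), (⟨x.val + 1, hlt⟩ : Fin n)} : Finset (Fin n))
          ⊆ C.filter (fun y => (SimpleGraph.pathGraph n).Adj x y) := by
        intro a ha
        simp only [Finset.mem_insert, Finset.mem_singleton] at ha
        rcases ha with rfl | rfl
        · rw [Finset.mem_filter]
          refine ⟨hprev, ?_⟩
          rw [SimpleGraph.pathGraph_adj]
          right; simp only; omega
        · rw [Finset.mem_filter]
          refine ⟨hnext, ?_⟩
          rw [SimpleGraph.pathGraph_adj]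
          left; simp only
      have hcard : ({(⟨x.val - 1, by omega⟩ : Fin n), (⟨x.val + 1, hlt⟩ : Fin n)} :
          Finset (Fin n)).card = 2 := by
        rw [Finset.card_pair]
        intro h
        rw [Fin.ext_iff] at h
        simp only at h
        omega
      calc 2 = _ := hcard.symm
        _ ≤ _ := Finset.card_le_card hsub
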